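/- For all real numbers x, y > 0, x·log(x/y) − (x − y) ≥ (x − y)² / (2x + 2y). -/

import Mathlib

/-- Elementary entropy inequality (inequality (5.8) of the paper):
`x log(x/y) − (x − y) ≥ (x − y)² / (2x + 2y)` for `x, y > 0`. -/
theorem entropy_lower_bound (x y : ℝ) (hx : 0 < x) (hy : 0 < y) :
    (x - y) ^ 2 / (2 * x + 2 * y) ≤ x * Real.log (x / y) - (x - y) := by
  set a := Real.sqrt x with ha'
  set b := Real.sqrt y with hb'
  have ha : 0 < a := Real.sqrt_pos.mpr hx
  have hb : 0 < b := Real.sqrt_pos.mpr hy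
  have hax : a ^ 2 = x := Real.sq_sqrt hx.le
  have hby : b ^ 2 = y := Real.sq_sqrt hy.le
  have hlog : 1 - b / a ≤ Real.log (a / b) := by
    have := Real.one_sub_inv_le_log_of_pos (div_pos ha hb)
    rwa [inv_div] at this
  have hxy : x / y = (a / b) ^ 2 := by
    rw [div_pow, hax, hby]
  have hlog2 : Real.log (x / y) = 2 * Real.log (a / b) := by
    rw [hxy, Real.log_pow]; push_cast; ring
  have key : (a - b) ^ 2 ≤ x * Real.log (x / y) - (x - y) := by
    rw [hlog2, ← hax, ← hby]
    have h1 : a ^ 2 * (1 - b / a) = a ^ 2 - a * b := by field_simp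
    nlinarith [mul_le_mul_of_nonneg_left hlog (sq_nonneg a), sq_nonneg (a - b)]
  have key2 : (x - y) ^ 2 / (2 * x + 2 * y) ≤ (a - b) ^ 2 := by
    rw [div_le_iff₀ (by linarith)]
    rw [← hax, ← hby]
    nlinarith [sq_nonneg (a - b), sq_nonneg (a + b), sq_nonneg (a*a - b*b), mul_pos ha hb]
  linarith
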